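/- Let ζ ∈ ℂ, Λ = diag(1, −1) ∈ Matrix (Fin 2) (Fin 2) ℂ, let Q : ℝ → Matrix (Fin 2) (Fin 2) ℂ be continuous, and let J : ℝ → Matrix (Fin 2) (Fin 2) ℂ be continuous such that for every x ∈ ℝ the function y ↦ exp(−iζΛ(x−y))·Q(y)·J(y)·exp(iζΛ(x−y)) is integrable on (−∞, x] and J(x) = I + ∫_{−∞}^{x} exp(−iζΛ(x−y))·Q(y)·J(y)·exp(iζΛ(x−y)) dy. Then J is differentiable and J'(x) = −iζ·(Λ·J(x) − J(x)·Λ) + Q(x)·J(x) for all x ∈ ℝ. -/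

import Mathlib

open Matrix Complex MeasureTheory

lemma exp_eq_helper (a b c d m : ℂ) (h : a + b = c + d) :
    Complex.exp a * m * Complex.exp b = Complex.exp c * (Complex.exp d * m) := by
  have h2 : Complex.exp a * Complex.exp b = Complex.exp c * Complex.exp d := by
    rw [← Complex.exp_add, ← Complex.exp_add, h]
  linear_combination m * h2

lemma volterra_scalar (α c : ℂ) (hc : α * c = 0) (g f : ℝ → ℂ) (hg : Continuous g)
    (hint : ∀ t : ℝ, IntegrableOn (fun y : ℝ => Complex.exp (-α * y) * g y) (Set.Iic t))
    (hf : ∀ t : ℝ, f t = c + Complex.exp (α * t) * ∫ y in Set.Iic t, Complex.exp (-α * y) * g y)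
    (x : ℝ) : HasDerivAt f (α * f x + g x) x := by
  set G : ℝ → ℂ := fun y => Complex.exp (-α * y) * g y with hG
  have hGc : Continuous G := by
    exact (Complex.continuous_exp.comp (by continuity)).mul hg
  have hF : HasDerivAt (fun t => ∫ y in Set.Iic t, G y) (G x) x := by
    have key : ∀ t : ℝ, (∫ y in Set.Iic t, G y) = (∫ y in Set.Iic x, G y) + ∫ y in x..t, G y := by
      intro t
      rw [← intervalIntegral.integral_Iic_sub_Iic (hint x) (hint t)]; ring
    have h := (intervalIntegral.integral_hasDerivAt_right
      (hGc.intervalIntegrable x x)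
      (hGc.aestronglyMeasurable.stronglyMeasurableAtFilter)
      hGc.continuousAt).const_add (∫ y in Set.Iic x, G y)
    rwa [show (fun t : ℝ => (∫ y in Set.Iic x, G y) + ∫ y in x..t, G y)
        = fun t => ∫ y in Set.Iic t, G y from funext fun t : ℝ => (key t).symm] at h
  have hexp : HasDerivAt (fun t : ℝ => Complex.exp (α * t)) (α * Complex.exp (α * x)) x := by
    have h1 : HasDerivAt (fun z : ℂ => Complex.exp (α * z)) (α * Complex.exp (α * x)) (x : ℂ) := by
      simpa [mul_comm, Function.comp_def] using
        (Complex.hasDerivAt_exp (α * x)).comp (x : ℂ) ((hasDerivAt_id (x : ℂ)).const_mul α)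
    simpa using h1.comp_ofReal
  have hmain := (hexp.mul hF).const_add c
  simp only [Pi.mul_apply] at hmain
  rw [show (fun t : ℝ => c + Complex.exp (α * t) * ∫ y in Set.Iic t, G y) = f
      from funext fun t : ℝ => (hf t).symm] at hmain
  refine HasDerivAt.congr_deriv hmain ?_
  rw [hf x]
  have hx : Complex.exp (α * x) * G x = g x := by
    rw [hG]
    simp only
    rw [← mul_assoc, ← Complex.exp_add]
    simp [show α * x + -α * x = 0 by ring]
  linear_combination hx - hc

/-- A continuous solution of the Volterra integral equation
`J(x) = I + ∫_{-∞}^x e^{-iζΛ(x-y)} Q(y) J(y) e^{iζΛ(x-y)} dy`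
solves the spatial Lax equation `J_x = -iζ[Λ,J] + QJ`. -/
theorem volterra_solves_lax
    (ζ : ℂ) (Λ : Matrix (Fin 2) (Fin 2) ℂ) (hΛ : Λ = Matrix.diagonal ![1, -1])
    (eΛ : ℝ → Matrix (Fin 2) (Fin 2) ℂ)
    (heΛ : ∀ s : ℝ, eΛ s = Matrix.diagonal
        ![Complex.exp (-Complex.I * ζ * (s : ℂ)), Complex.exp (Complex.I * ζ * (s : ℂ))])
    (Q J : ℝ → Matrix (Fin 2) (Fin 2) ℂ)
    (hQcont : ∀ i j : Fin 2, Continuous fun x => Q x i j)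
    (hJcont : ∀ i j : Fin 2, Continuous fun x => J x i j)
    (hint : ∀ x : ℝ, ∀ i j : Fin 2,
      IntegrableOn (fun y => (eΛ (x - y) * Q y * J y * eΛ (-(x - y))) i j) (Set.Iic x))
    (heq : ∀ x : ℝ, ∀ i j : Fin 2,
      J x i j = (1 : Matrix (Fin 2) (Fin 2) ℂ) i j
        + ∫ y in Set.Iic x, (eΛ (x - y) * Q y * J y * eΛ (-(x - y))) i j) :
    ∀ x : ℝ, ∀ i j : Fin 2,
      HasDerivAt (fun s => J s i j)
        (((-(Complex.I * ζ)) • (Λ * J x - J x * Λ) + Q x * J x) i j) x := by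
  intro x i j
  set α : ℂ := -(Complex.I * ζ) * (Λ i i - Λ j j) with hα
  have hg : Continuous fun y => (Q y * J y) i j := by
    simp only [Matrix.mul_apply, Fin.sum_univ_two]
    exact ((hQcont i 0).mul (hJcont 0 j)).add ((hQcont i 1).mul (hJcont 1 j))
  have hc : α * (1 : Matrix (Fin 2) (Fin 2) ℂ) i j = 0 := by
    fin_cases i <;> fin_cases j <;>
      simp [hα, hΛ, Matrix.one_apply]
  have hent : ∀ t y : ℝ, (eΛ (t - y) * Q y * J y * eΛ (-(t - y))) i j
      = Complex.exp (α * t) * (Complex.exp (-α * y) * ((Q y * J y) i j)) := by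
    intro t y
    rw [mul_assoc (eΛ (t - y)) (Q y) (J y), heΛ, heΛ, Matrix.mul_diagonal, Matrix.diagonal_mul]
    fin_cases i <;> fin_cases j <;>
      simp only [hα, hΛ, Fin.isValue, Fin.zero_eta, Fin.mk_one, Matrix.cons_val_zero,
        Matrix.cons_val_one, Matrix.head_cons, Matrix.diagonal_apply_eq] <;>
      exact exp_eq_helper _ _ _ _ _ (by push_cast; ring)
  have hint' : ∀ t : ℝ, IntegrableOn
      (fun y : ℝ => Complex.exp (-α * y) * ((Q y * J y) i j)) (Set.Iic t) := by
    intro t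
    have h1 := hint t i j
    rw [show (fun y : ℝ => (eΛ (t - y) * Q y * J y * eΛ (-(t - y))) i j)
        = fun y : ℝ => Complex.exp (α * t) * (Complex.exp (-α * y) * ((Q y * J y) i j))
        from funext fun y : ℝ => hent t y] at h1
    have h2 := h1.const_mul (Complex.exp (α * t))⁻¹
    simpa [← mul_assoc, inv_mul_cancel₀ (Complex.exp_ne_zero (α * t)), IntegrableOn] using h2
  have hf : ∀ t : ℝ, J t i j = (1 : Matrix (Fin 2) (Fin 2) ℂ) i j
      + Complex.exp (α * t) * ∫ y in Set.Iic t, Complex.exp (-α * y) * ((Q y * J y) i j) := by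
    intro t
    rw [heq t i j]
    simp only [hent]
    rw [MeasureTheory.integral_const_mul]
  have key := volterra_scalar α ((1 : Matrix (Fin 2) (Fin 2) ℂ) i j) hc
    (fun y => (Q y * J y) i j) (fun s => J s i j) hg hint' hf x
  convert key using 1
  simp only [Matrix.add_apply, Matrix.smul_apply, Matrix.sub_apply, Matrix.mul_apply,
    Fin.sum_univ_two, smul_eq_mul, hα, hΛ]
  fin_cases i <;> fin_cases j <;> simp <;> ring
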